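/- arXiv:2510.19119 — 2 statements merged into one kernel-verified Lean document; each statement's English description precedes it below -/
import Mathlib

section
/- Let X₁, …, X_M ∈ ℝ^d, let w ∈ ℝ^M satisfy w_j ≥ 0 for all j and Σ_j w_j = 1, and suppose M(w) = Σ_{j=1}^M w_j X_j X_jᵀ is invertible. Let f = max_{1 ≤ i ≤ M} X_iᵀ M(w)⁻¹ X_i. For λ > 0, n > 0, set V = λ·I + n·M(w). Then for any vectors θ̂, θ* ∈ ℝ^d, √( (1/M) Σ_{i=1}^M ( X_iᵀ (θ̂ − θ*) )² ) ≤ √(f / n) · √( (θ̂ − θ*)ᵀ V (θ̂ − θ*) ). -/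
open Matrix

private lemma dot_symm_aux {d : ℕ} (A : Matrix (Fin d) (Fin d) ℝ) (hA : Aᵀ = A)
    (x y : Fin d → ℝ) : x ⬝ᵥ A *ᵥ y = (A *ᵥ x) ⬝ᵥ y := by
  rw [dotProduct_mulVec, ← Matrix.mulVec_transpose, hA]

/-- Deterministic core of the RMSE upper bound (Lemma 1): for a design
`w` in the simplex with invertible design matrix `M(w)`, G-optimal value
`f = max_i X_iᵀ M(w)⁻¹ X_i`, and `V = λ I + n M(w)`, the RMSE of the predicted
rewards is at most `√(f/n) · ‖θ̂ − θ*‖_V`. -/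
theorem stmt_5 {d M : ℕ} (hM : 0 < M) (X : Fin M → Fin d → ℝ)
    (w : Fin M → ℝ) (hw : ∀ j, 0 ≤ w j) (hw1 : ∑ j, w j = 1)
    (Mw : Matrix (Fin d) (Fin d) ℝ)
    (hMw : Mw = ∑ j : Fin M, w j • vecMulVec (X j) (X j))
    (hMwinv : IsUnit Mw)
    (f : ℝ) (hf : f = ⨆ i : Fin M, X i ⬝ᵥ Mw⁻¹ *ᵥ X i)
    (lam n : ℝ) (hlam : 0 < lam) (hn : 0 < n)
    (V : Matrix (Fin d) (Fin d) ℝ)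
    (hV : V = lam • (1 : Matrix (Fin d) (Fin d) ℝ) + n • Mw)
    (θhat θstar : Fin d → ℝ) :
    Real.sqrt ((1 / M) * ∑ i : Fin M, (X i ⬝ᵥ (θhat - θstar)) ^ 2) ≤
      Real.sqrt (f / n) *
        Real.sqrt ((θhat - θstar) ⬝ᵥ V *ᵥ (θhat - θstar)) := by
  have hdet : IsUnit Mw.det := (Matrix.isUnit_iff_isUnit_det Mw).mp hMwinv
  set v := θhat - θstar with hv
  have hsymT : Mwᵀ = Mw := by
    rw [hMw]
    ext i j
    simp only [transpose_apply, Matrix.sum_apply, Matrix.smul_apply, vecMulVec_apply,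
      smul_eq_mul]
    exact Finset.sum_congr rfl fun k _ => by ring
  have hsym : Mw.IsHermitian := by
    have : Mwᴴ = Mw := by
      rw [← hsymT]; ext i j
      simp only [conjTranspose_apply, transpose_apply, star_trivial]
      exact (congrFun (congrFun hsymT i) j).symm
    exact this
  have quad : ∀ x : Fin d → ℝ, x ⬝ᵥ Mw *ᵥ x = ∑ j, w j * (X j ⬝ᵥ x) ^ 2 := by
    intro x
    rw [hMw]
    have hsumMV : (∑ j : Fin M, w j • vecMulVec (X j) (X j)) *ᵥ x
        = ∑ j : Fin M, (w j • vecMulVec (X j) (X j)) *ᵥ x := by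
      ext i
      simp only [mulVec, dotProduct, Matrix.sum_apply, Finset.sum_apply, Finset.sum_mul]
      exact Finset.sum_comm
    have hdsum : ∀ (y : Fin M → Fin d → ℝ), x ⬝ᵥ (∑ j, y j) = ∑ j, x ⬝ᵥ y j := by
      intro y
      simp only [dotProduct, Finset.sum_apply, Finset.mul_sum]
      exact Finset.sum_comm
    have hjv : ∀ u : Fin d → ℝ, vecMulVec u u *ᵥ x = (u ⬝ᵥ x) • u := by
      intro u
      ext i
      simp only [mulVec, vecMulVec_apply, dotProduct, Pi.smul_apply, smul_eq_mul,
        Finset.sum_mul]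
      exact Finset.sum_congr rfl fun k _ => by ring
    rw [hsumMV, hdsum]
    refine Finset.sum_congr rfl fun j _ => ?_
    rw [smul_mulVec, dotProduct_smul, hjv, dotProduct_smul, smul_eq_mul, smul_eq_mul,
      dotProduct_comm, sq]
  have hPSD : Mw.PosSemidef := by
    refine PosSemidef.of_dotProduct_mulVec_nonneg hsym fun x => ?_
    rw [star_trivial, quad x]
    exact Finset.sum_nonneg fun j _ => mul_nonneg (hw j) (sq_nonneg _)
  open scoped MatrixOrder in set S := CFC.sqrt Mw with hSdef
  have hSS : S * S = Mw := by open scoped MatrixOrder in exact CFC.sqrt_mul_sqrt_self Mw hPSD.nonneg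
  have hSsym : Sᵀ = S := by
    have h : Sᴴ = S := by open scoped MatrixOrder in exact (CFC.sqrt_nonneg Mw).posSemidef.1
    rw [← h]; ext i j
    simp only [conjTranspose_apply, transpose_apply, star_trivial]
    exact (congrFun (congrFun h i) j).symm
  have hSmul : ∀ x : Fin d → ℝ, Mw *ᵥ x = S *ᵥ (S *ᵥ x) := by
    intro x; rw [← hSS, ← mulVec_mulVec]
  have key : ∀ i, (X i ⬝ᵥ v) ^ 2 ≤ (X i ⬝ᵥ Mw⁻¹ *ᵥ X i) * (v ⬝ᵥ Mw *ᵥ v) ∧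
      0 ≤ X i ⬝ᵥ Mw⁻¹ *ᵥ X i := by
    intro i
    set a := Mw⁻¹ *ᵥ X i with ha
    have hMa : Mw *ᵥ a = X i := by
      rw [ha, mulVec_mulVec, Matrix.mul_nonsing_inv _ hdet, one_mulVec]
    have h1 : X i ⬝ᵥ v = (S *ᵥ a) ⬝ᵥ (S *ᵥ v) := by
      calc X i ⬝ᵥ v = (Mw *ᵥ a) ⬝ᵥ v := by rw [hMa]
        _ = a ⬝ᵥ Mw *ᵥ v := (dot_symm_aux Mw hsymT a v).symm
        _ = a ⬝ᵥ S *ᵥ (S *ᵥ v) := by rw [hSmul]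
        _ = (S *ᵥ a) ⬝ᵥ (S *ᵥ v) := dot_symm_aux S hSsym a (S *ᵥ v)
    have h2 : (S *ᵥ a) ⬝ᵥ (S *ᵥ a) = X i ⬝ᵥ Mw⁻¹ *ᵥ X i := by
      calc (S *ᵥ a) ⬝ᵥ (S *ᵥ a) = a ⬝ᵥ S *ᵥ (S *ᵥ a) := (dot_symm_aux S hSsym a (S *ᵥ a)).symm
        _ = a ⬝ᵥ Mw *ᵥ a := by rw [hSmul]
        _ = a ⬝ᵥ X i := by rw [hMa]
        _ = X i ⬝ᵥ a := dotProduct_comm a (X i)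
    have h3 : (S *ᵥ v) ⬝ᵥ (S *ᵥ v) = v ⬝ᵥ Mw *ᵥ v := by
      calc (S *ᵥ v) ⬝ᵥ (S *ᵥ v) = v ⬝ᵥ S *ᵥ (S *ᵥ v) := (dot_symm_aux S hSsym v (S *ᵥ v)).symm
        _ = v ⬝ᵥ Mw *ᵥ v := by rw [hSmul]
    have hCS : ((S *ᵥ a) ⬝ᵥ (S *ᵥ v)) ^ 2 ≤
        ((S *ᵥ a) ⬝ᵥ (S *ᵥ a)) * ((S *ᵥ v) ⬝ᵥ (S *ᵥ v)) := by
      have := Finset.sum_mul_sq_le_sq_mul_sq Finset.univ (S *ᵥ a) (S *ᵥ v)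
      simpa [dotProduct, sq] using this
    constructor
    · rw [h1, ← h2, ← h3]; exact hCS
    · rw [← h2]
      exact Finset.sum_nonneg fun k _ => mul_self_nonneg _
  have hterm_le_f : ∀ i, X i ⬝ᵥ Mw⁻¹ *ᵥ X i ≤ f := by
    intro i
    rw [hf]
    exact le_ciSup (f := fun i => X i ⬝ᵥ Mw⁻¹ *ᵥ X i)
      (Set.Finite.bddAbove (Set.finite_range _)) i
  have hMv : 0 ≤ v ⬝ᵥ Mw *ᵥ v := by
    have := hPSD.dotProduct_mulVec_nonneg v; rwa [star_trivial] at this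
  have hf0 : 0 ≤ f := le_trans (key ⟨0, hM⟩).2 (hterm_le_f ⟨0, hM⟩)
  have hvv : 0 ≤ v ⬝ᵥ v := Finset.sum_nonneg fun k _ => mul_self_nonneg _
  have hVexp : v ⬝ᵥ V *ᵥ v = lam * (v ⬝ᵥ v) + n * (v ⬝ᵥ Mw *ᵥ v) := by
    rw [hV, add_mulVec, smul_mulVec, smul_mulVec, one_mulVec, dotProduct_add,
      dotProduct_smul, dotProduct_smul, smul_eq_mul, smul_eq_mul]
  have hmain : (1 / M) * ∑ i : Fin M, (X i ⬝ᵥ v) ^ 2 ≤ (f / n) * (v ⬝ᵥ V *ᵥ v) := by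
    have hsum : ∑ i : Fin M, (X i ⬝ᵥ v) ^ 2 ≤ (M : ℝ) * (f * (v ⬝ᵥ Mw *ᵥ v)) := by
      calc ∑ i : Fin M, (X i ⬝ᵥ v) ^ 2 ≤ ∑ _i : Fin M, f * (v ⬝ᵥ Mw *ᵥ v) := by
            refine Finset.sum_le_sum fun i _ => le_trans (key i).1 ?_
            exact mul_le_mul_of_nonneg_right (hterm_le_f i) hMv
        _ = (M : ℝ) * (f * (v ⬝ᵥ Mw *ᵥ v)) := by
            rw [Finset.sum_const, Finset.card_univ, Fintype.card_fin, nsmul_eq_mul]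
    have hMne : (M : ℝ) ≠ 0 := Nat.cast_ne_zero.mpr hM.ne'
    calc (1 / M) * ∑ i : Fin M, (X i ⬝ᵥ v) ^ 2
        ≤ (1 / M) * ((M : ℝ) * (f * (v ⬝ᵥ Mw *ᵥ v))) := by
          exact mul_le_mul_of_nonneg_left hsum (by positivity)
      _ = f * (v ⬝ᵥ Mw *ᵥ v) := by field_simp
      _ = (f / n) * (n * (v ⬝ᵥ Mw *ᵥ v)) := by field_simp
      _ ≤ (f / n) * (v ⬝ᵥ V *ᵥ v) := by
          refine mul_le_mul_of_nonneg_left ?_ (div_nonneg hf0 hn.le)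
          rw [hVexp]
          nlinarith [mul_nonneg hlam.le hvv]
  calc Real.sqrt ((1 / M) * ∑ i : Fin M, (X i ⬝ᵥ v) ^ 2)
      ≤ Real.sqrt ((f / n) * (v ⬝ᵥ V *ᵥ v)) := Real.sqrt_le_sqrt hmain
    _ = Real.sqrt (f / n) * Real.sqrt (v ⬝ᵥ V *ᵥ v) :=
        Real.sqrt_mul (div_nonneg hf0 hn.le) _
end

section
/- There exists a universal constant c > 0 such that for every integer t ≥ 1 and every measurable estimator p̂ : ({0,1})^t → ℝ, there exists p ∈ [1/4, 3/4] with ∫ |p̂(x) − p| dμ_p^{⊗t}(x) ≥ c · √( p(1 − p) / t ), where μ_p^{⊗t} denotes the t-fold product of the Bernoulli measure with success probability p on {0,1}. -/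
open MeasureTheory

/-- The Bernoulli measure with success probability `p` on `Bool`
(`true` plays the role of `1`, `false` that of `0`). -/
noncomputable def bernoulliMeasure (p : ℝ) : Measure Bool :=
  ENNReal.ofReal p • Measure.dirac true + ENNReal.ofReal (1 - p) • Measure.dirac false

namespace Stmt11Aux

/-- Weight of a Bernoulli point. -/
def w (r : ℝ) (b : Bool) : ℝ := if b then r else 1 - r

lemma w_nonneg {r : ℝ} (h0 : 0 ≤ r) (h1 : r ≤ 1) (b : Bool) : 0 ≤ w r b := by
  cases b <;> simp [w] <;> linarith

instance (r : ℝ) : IsFiniteMeasure (bernoulliMeasure r) := by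
  constructor
  have : bernoulliMeasure r Set.univ = ENNReal.ofReal r * 1 + ENNReal.ofReal (1 - r) * 1 := by
    simp [bernoulliMeasure]
  rw [this]
  exact ENNReal.add_lt_top.2 ⟨by simp [ENNReal.ofReal_lt_top], by simp [ENNReal.ofReal_lt_top]⟩

lemma bern_singleton (r : ℝ) (b : Bool) :
    bernoulliMeasure r {b} = ENNReal.ofReal (w r b) := by
  cases b <;> simp [bernoulliMeasure, w, Measure.dirac_apply]

lemma pi_singleton {t : ℕ} (r : ℝ) (h0 : 0 ≤ r) (h1 : r ≤ 1) (x : Fin t → Bool) :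
    (Measure.pi fun _ : Fin t => bernoulliMeasure r) {x}
      = ENNReal.ofReal (∏ i, w r (x i)) := by
  rw [← Set.univ_pi_singleton, Measure.pi_pi]
  simp only [bern_singleton]
  rw [← ENNReal.ofReal_prod_of_nonneg fun i _ => w_nonneg h0 h1 (x i)]

lemma integral_formula {t : ℕ} (r : ℝ) (h0 : 0 ≤ r) (h1 : r ≤ 1)
    (f : (Fin t → Bool) → ℝ) :
    ∫ x, f x ∂(Measure.pi fun _ : Fin t => bernoulliMeasure r)
      = ∑ x : Fin t → Bool, (∏ i, w r (x i)) * f x := by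
  rw [integral_fintype (.of_finite)]
  refine Finset.sum_congr rfl fun x _ => ?_
  rw [measureReal_def, pi_singleton r h0 h1, ENNReal.toReal_ofReal
    (Finset.prod_nonneg fun i _ => w_nonneg h0 h1 (x i))]
  simp [mul_comm]

lemma sum_prod {t : ℕ} (f : Bool → ℝ) :
    ∑ x : Fin t → Bool, ∏ i, f (x i) = (f true + f false) ^ t := by
  have := Finset.prod_univ_sum (fun _ : Fin t => (Finset.univ : Finset Bool))
      (fun _ b => f b)
  rw [Fintype.piFinset_univ] at this
  rw [← this]
  simp [Fintype.sum_bool]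

end Stmt11Aux

open Stmt11Aux

set_option maxHeartbeats 1000000

/-- Minimax lower bound for estimating a Bernoulli mean: there is a universal
constant `c > 0` such that for every sample size `t ≥ 1` and every measurable
estimator `p̂ : {0,1}^t → ℝ` there is some `p ∈ [1/4, 3/4]` with
`E_{μ_p^{⊗t}} |p̂ − p| ≥ c √(p(1−p)/t)`. -/
theorem stmt_11 :
    ∃ c : ℝ, 0 < c ∧ ∀ t : ℕ, 1 ≤ t → ∀ phat : (Fin t → Bool) → ℝ,
      Measurable phat →
      ∃ p ∈ Set.Icc (1 / 4 : ℝ) (3 / 4),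
        c * Real.sqrt (p * (1 - p) / t) ≤
          ∫ x, |phat x - p| ∂(Measure.pi fun _ : Fin t => bernoulliMeasure p) := by
  refine ⟨1/8, by norm_num, fun t ht phat _ => ?_⟩
  have ht0 : (0:ℝ) < t := by exact_mod_cast Nat.lt_of_lt_of_le Nat.zero_lt_one ht
  set s : ℝ := Real.sqrt t with hs_def
  have hs1 : 1 ≤ s := by
    rw [hs_def, show (1:ℝ) = Real.sqrt 1 by simp]
    exact Real.sqrt_le_sqrt (by exact_mod_cast ht)
  have hs0 : 0 < s := lt_of_lt_of_le one_pos hs1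
  have hs2 : s ^ 2 = t := Real.sq_sqrt ht0.le
  set δ : ℝ := 1 / (4 * s) with hδ_def
  have hδ0 : 0 < δ := by positivity
  have hδ4 : δ ≤ 1 / 4 := by
    rw [hδ_def]
    rw [div_le_div_iff₀ (by positivity) (by norm_num)]
    nlinarith
  set p : ℝ := 1 / 2 with hp_def
  set q : ℝ := 1 / 2 + δ with hq_def
  have hq1 : q ≤ 3 / 4 := by rw [hq_def]; linarith
  have hq0 : 1 / 4 ≤ q := by rw [hq_def]; linarith
  set P : (Fin t → Bool) → ℝ := fun x => ∏ i, w p (x i) with hP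
  set Q : (Fin t → Bool) → ℝ := fun x => ∏ i, w q (x i) with hQ
  have hPn : ∀ x, 0 ≤ P x := fun x =>
    Finset.prod_nonneg fun i _ => w_nonneg (by norm_num) (by norm_num) _
  have hq0' : (0:ℝ) ≤ q := le_trans (by norm_num) hq0
  have hq1' : q ≤ 1 := le_trans hq1 (by norm_num)
  have hQn : ∀ x, 0 ≤ Q x := fun x =>
    Finset.prod_nonneg fun i _ => w_nonneg hq0' hq1' _
  -- sums
  have hwp : w p true = 1/2 ∧ w p false = 1/2 := by
    constructor <;> simp [w, hp_def] <;> norm_num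
  have hwq : w q true = 1/2 + δ ∧ w q false = 1/2 - δ := by
    refine ⟨by simp [w, hq_def], ?_⟩
    simp only [w, if_neg Bool.false_ne_true, hq_def]
    ring
  have sumP : ∑ x : Fin t → Bool, P x = 1 := by
    rw [hP, sum_prod]; rw [hwp.1, hwp.2]; norm_num
  have sumQ : ∑ x : Fin t → Bool, Q x = 1 := by
    rw [hQ, sum_prod]; rw [hwq.1, hwq.2]; norm_num
  have sumP2 : ∑ x : Fin t → Bool, P x ^ 2 = (1/2 : ℝ) ^ t := by
    have : ∀ x : Fin t → Bool, P x ^ 2 = ∏ i, (w p (x i) ^ 2) := by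
      intro x; rw [hP]; rw [← Finset.prod_pow]
    simp_rw [this]
    rw [sum_prod (fun b => w p b ^ 2), hwp.1, hwp.2]
    norm_num
  have sumQ2 : ∑ x : Fin t → Bool, Q x ^ 2 = (1/2 + 2 * δ^2 : ℝ) ^ t := by
    have : ∀ x : Fin t → Bool, Q x ^ 2 = ∏ i, (w q (x i) ^ 2) := by
      intro x; rw [hQ]; rw [← Finset.prod_pow]
    simp_rw [this]
    rw [sum_prod (fun b => w q b ^ 2), hwq.1, hwq.2]
    ring
  have sumPQ : ∑ x : Fin t → Bool, P x * Q x = (1/2 : ℝ) ^ t := by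
    have : ∀ x : Fin t → Bool, P x * Q x = ∏ i, (w p (x i) * w q (x i)) := by
      intro x; rw [hP, hQ, ← Finset.prod_mul_distrib]
    simp_rw [this]
    rw [sum_prod (fun b => w p b * w q b), hwp.1, hwp.2, hwq.1, hwq.2]
    ring_nf
  -- chi-square bound
  have hS : ∑ x : Fin t → Bool, (P x - Q x) ^ 2
      = (1/2 + 2*δ^2 : ℝ) ^ t - (1/2 : ℝ) ^ t := by
    have : ∀ x : Fin t → Bool, (P x - Q x) ^ 2 = P x ^ 2 - 2 * (P x * Q x) + Q x ^ 2 := by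
      intro x; ring
    simp_rw [this]
    rw [Finset.sum_add_distrib, Finset.sum_sub_distrib, sumP2, sumQ2, ← Finset.mul_sum, sumPQ]
    ring
  have hexp : (1 + 4 * δ^2 : ℝ) ^ t ≤ Real.exp (1/4) := by
    have h1 : (1 + 4 * δ^2 : ℝ) ^ t ≤ Real.exp (4 * δ^2) ^ t := by
      apply pow_le_pow_left₀ (by positivity)
      linarith [Real.add_one_le_exp (4 * δ^2)]
    have h2 : Real.exp (4 * δ^2) ^ t = Real.exp (4 * δ^2 * t) := by
      rw [← Real.exp_nat_mul]; ring_nf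
    have h3 : 4 * δ^2 * t = 1/4 := by
      rw [hδ_def]; field_simp; nlinarith
    rw [h2, h3] at h1; exact h1
  have hexp2 : Real.exp (1/4 : ℝ) ≤ 2 := by
    have h4 : Real.exp (1/4 : ℝ) ^ 4 = Real.exp 1 := by
      rw [← Real.exp_nat_mul]; norm_num
    have he : Real.exp 1 < 2.7182818286 := Real.exp_one_lt_d9
    nlinarith [Real.exp_pos (1/4 : ℝ), sq_nonneg (Real.exp (1/4:ℝ) - 2),
      sq_nonneg (Real.exp (1/4:ℝ) + 2), sq_nonneg (Real.exp (1/4:ℝ)^2 - 4)]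
  set D : ℝ := ∑ x : Fin t → Bool, |P x - Q x| with hD
  have hD1 : D ≤ 1 := by
    have hcs := Finset.sum_mul_sq_le_sq_mul_sq Finset.univ
      (fun x : Fin t → Bool => |P x - Q x|) (fun _ => 1)
    simp only [mul_one, one_pow, sq_abs] at hcs
    have hcard : ∑ _x : Fin t → Bool, (1:ℝ) = (2:ℝ) ^ t := by
      rw [Finset.sum_const, Finset.card_univ]
      have : Fintype.card (Fin t → Bool) = 2 ^ t := by
        rw [Fintype.card_fun]; simp
      rw [this]
      simp [Nat.cast_pow]
    rw [hcard, hS] at hcs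
    have key : ((1/2 + 2*δ^2 : ℝ) ^ t - (1/2 : ℝ) ^ t) * 2 ^ t
        = (1 + 4 * δ^2 : ℝ) ^ t - 1 := by
      rw [sub_mul, ← mul_pow, ← mul_pow]; ring_nf
    have hD2 : D ^ 2 ≤ (1 + 4 * δ^2 : ℝ) ^ t - 1 := by
      rw [← key]; exact hcs
    have hDn : 0 ≤ D := Finset.sum_nonneg fun x _ => abs_nonneg _
    nlinarith
  -- min sum lower bound
  have hmin : (1:ℝ) / 2 ≤ ∑ x : Fin t → Bool, min (P x) (Q x) := by
    have : ∀ x : Fin t → Bool, min (P x) (Q x) = (P x + Q x - |P x - Q x|) / 2 := by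
      intro x
      rcases le_total (P x) (Q x) with h | h
      · rw [min_eq_left h, abs_of_nonpos (by linarith)]; ring
      · rw [min_eq_right h, abs_of_nonneg (by linarith)]; ring
    simp_rw [this]
    rw [← Finset.sum_div, Finset.sum_sub_distrib, Finset.sum_add_distrib, sumP, sumQ, ← hD]
    linarith
  -- two-point argument
  set EP : ℝ := ∑ x : Fin t → Bool, P x * |phat x - p| with hEP
  set EQ : ℝ := ∑ x : Fin t → Bool, Q x * |phat x - q| with hEQ
  have hlow : δ / 2 ≤ EP + EQ := by
    have key : ∀ x : Fin t → Bool,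
        min (P x) (Q x) * δ ≤ P x * |phat x - p| + Q x * |phat x - q| := by
      intro x
      have habs : δ ≤ |phat x - p| + |phat x - q| := by
        have := abs_sub_abs_le_abs_sub (phat x - p) (phat x - q)
        have h2 : |(phat x - p) - (phat x - q)| = δ := by
          rw [show (phat x - p) - (phat x - q) = q - p by ring, hq_def, hp_def]
          rw [show (1/2 + δ) - (1/2 : ℝ) = δ by ring, abs_of_pos hδ0]
        calc δ = |(phat x - p) - (phat x - q)| := h2.symm
        _ ≤ |phat x - p| + |phat x - q| := abs_sub _ _
      have h1 : min (P x) (Q x) * δ ≤ min (P x) (Q x) * (|phat x - p| + |phat x - q|) :=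
        mul_le_mul_of_nonneg_left habs (le_min (hPn x) (hQn x))
      have h2 : min (P x) (Q x) * (|phat x - p| + |phat x - q|)
          ≤ P x * |phat x - p| + Q x * |phat x - q| := by
        have hl := min_le_left (P x) (Q x)
        have hr := min_le_right (P x) (Q x)
        nlinarith [abs_nonneg (phat x - p), abs_nonneg (phat x - q)]
      linarith
    calc δ / 2 = (1/2) * δ := by ring
    _ ≤ (∑ x : Fin t → Bool, min (P x) (Q x)) * δ := by
        apply mul_le_mul_of_nonneg_right hmin hδ0.le
    _ = ∑ x : Fin t → Bool, min (P x) (Q x) * δ := by rw [Finset.sum_mul]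
    _ ≤ ∑ x : Fin t → Bool, (P x * |phat x - p| + Q x * |phat x - q|) :=
        Finset.sum_le_sum fun x _ => key x
    _ = EP + EQ := by rw [Finset.sum_add_distrib]
  -- conclude
  have hbound : ∀ r : ℝ, 1/4 ≤ r → r ≤ 3/4 →
      (1/8 : ℝ) * Real.sqrt (r * (1 - r) / t) ≤ δ / 4 := by
    intro r h1 h2
    have hr : r * (1 - r) ≤ 1/4 := by nlinarith [sq_nonneg (r - 1/2)]
    have hsq : Real.sqrt (r * (1 - r) / t) ≤ 1 / (2 * s) := by
      rw [show r * (1 - r) / t = r * (1-r) / s^2 by rw [hs2]]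
      rw [show (1 : ℝ) / (2 * s) = Real.sqrt ((1/4) / s^2) by
        rw [show (1/4 : ℝ) / s^2 = (1/(2*s))^2 by field_simp; ring,
          Real.sqrt_sq (by positivity)]]
      exact Real.sqrt_le_sqrt (by gcongr)
    calc (1/8 : ℝ) * Real.sqrt (r * (1 - r) / t) ≤ (1/8) * (1 / (2*s)) := by
          apply mul_le_mul_of_nonneg_left hsq (by norm_num)
    _ = δ / 4 := by rw [hδ_def]; ring
  have hip : ∫ x, |phat x - p| ∂(Measure.pi fun _ : Fin t => bernoulliMeasure p) = EP := by
    rw [integral_formula p (by norm_num) (by norm_num)]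
  have hiq : ∫ x, |phat x - q| ∂(Measure.pi fun _ : Fin t => bernoulliMeasure q) = EQ := by
    rw [integral_formula q hq0' hq1']
  rcases le_or_gt (δ/4) EP with h | h
  · exact ⟨p, ⟨by norm_num [hp_def], by norm_num [hp_def]⟩,
      by rw [hip]; exact le_trans (hbound p (by norm_num [hp_def]) (by norm_num [hp_def])) h⟩
  · refine ⟨q, ⟨hq0, hq1⟩, ?_⟩
    rw [hiq]
    exact le_trans (hbound q hq0 hq1) (by linarith)
end
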